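/- Let f and g be functions on [0,1]^d of bounded HK0-variation. Then for any a,b ∈ [0,1]^d with a ≤ b (coordinatewise): V_HK0(f+g;[0,b]) − V_HK0(f+g;[0,a]) ≤ V_HK0(f;[0,b]) + V_HK0(g;[0,b]) − V_HK0(f;[0,a]) − V_HK0(g;[0,a]). -/

import Mathlib

open MeasureTheory Finset

noncomputable section

/-- The quasi-volume `Δ` of `f` over the box `[a,b]` in the coordinates of `S`;
the coordinates outside `S` are fixed according to the anchor point `p`. -/
def quasiVol {d : ℕ} (f : (Fin d → ℝ) → ℝ) (S : Finset (Fin d)) (p a b : Fin d → ℝ) : ℝ :=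
  ∑ T ∈ S.powerset, (-1 : ℝ) ^ T.card *
    f (fun i => if i ∈ S then (if i ∈ T then a i else b i) else p i)

/-- A grid (a partition generated by one-dimensional partitions of the sides) of the
box `[lo, hi]` in the coordinates of `S`. -/
structure Grid (d : ℕ) (S : Finset (Fin d)) (lo hi : Fin d → ℝ) where
  m : Fin d → ℕ
  t : Fin d → ℕ → ℝ
  mono : ∀ i ∈ S, ∀ j k : ℕ, j ≤ k → k ≤ m i → t i j ≤ t i k
  first : ∀ i ∈ S, t i 0 = lo i
  last : ∀ i ∈ S, t i (m i) = hi i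

/-- The sum, over all cells of a grid, of the absolute value of the quasi-volume of the cell. -/
def gridSum {d : ℕ} (f : (Fin d → ℝ) → ℝ) (S : Finset (Fin d)) (p lo hi : Fin d → ℝ)
    (G : Grid d S lo hi) : ℝ :=
  ∑ k ∈ Fintype.piFinset (fun i => Finset.range (if i ∈ S then G.m i else 1)),
    |quasiVol f S p (fun i => G.t i (k i)) (fun i => G.t i (k i + 1))|

/-- The variation in the sense of Vitali of `f` on the face of the box `[lo, hi]` with active
coordinates `S`, the remaining coordinates being fixed according to the anchor `p`:
the supremum of `gridSum` over all grids. -/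
def vitaliVar {d : ℕ} (f : (Fin d → ℝ) → ℝ) (S : Finset (Fin d)) (p lo hi : Fin d → ℝ) : ℝ :=
  sSup (Set.range (gridSum f S p lo hi))

/-- The Vitali variation on the face `(S, p)` of `[lo, hi]` is bounded (finite). -/
def BddVitali {d : ℕ} (f : (Fin d → ℝ) → ℝ) (S : Finset (Fin d)) (p lo hi : Fin d → ℝ) : Prop :=
  BddAbove (Set.range (gridSum f S p lo hi))

/-- Hardy–Krause-type variation of `f` on the box `[lo, hi]` with anchor `p`: the sum, over all
nonempty sets `S` of coordinates, of the Vitali variation of the restriction of `f` to the face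
of `[lo, hi]` whose coordinates outside `S` are fixed according to `p`. -/
def hkVarOn {d : ℕ} (f : (Fin d → ℝ) → ℝ) (p lo hi : Fin d → ℝ) : ℝ :=
  ∑ S ∈ (Finset.univ : Finset (Fin d)).powerset.erase ∅, vitaliVar f S p lo hi

/-- All the Vitali variations occurring in `hkVarOn` are bounded. -/
def BddHKVarOn {d : ℕ} (f : (Fin d → ℝ) → ℝ) (p lo hi : Fin d → ℝ) : Prop :=
  ∀ S ∈ (Finset.univ : Finset (Fin d)).powerset.erase ∅, BddVitali f S p lo hi

/-- The Hardy–Krause variation of `f` on `[0,1]^d`, anchored at `1`. -/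
def hkVar {d : ℕ} (f : (Fin d → ℝ) → ℝ) : ℝ := hkVarOn f 1 0 1

/-- `f` has bounded Hardy–Krause variation (anchored at `1`). -/
def BddHKVar {d : ℕ} (f : (Fin d → ℝ) → ℝ) : Prop := BddHKVarOn f 1 0 1

/-- The Hardy–Krause variation of `f` on the box `[0, a]`, anchored at `0`. -/
def hkVar0On {d : ℕ} (f : (Fin d → ℝ) → ℝ) (a : Fin d → ℝ) : ℝ := hkVarOn f 0 0 a

/-- The Hardy–Krause variation of `f` on `[0,1]^d`, anchored at `0`. -/
def hkVar0 {d : ℕ} (f : (Fin d → ℝ) → ℝ) : ℝ := hkVarOn f 0 0 1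

/-- `f` has bounded Hardy–Krause variation anchored at `0`. -/
def BddHKVar0 {d : ℕ} (f : (Fin d → ℝ) → ℝ) : Prop := BddHKVarOn f 0 0 1

/-- `f` is completely monotone: every quasi-volume of an axis-parallel box contained in a face
of `[0,1]^d` (coordinates outside the active set `S` being fixed at `0` or `1`) is nonnegative. -/
def CompletelyMonotone {d : ℕ} (f : (Fin d → ℝ) → ℝ) : Prop :=
  ∀ S : Finset (Fin d), S.Nonempty → ∀ p : Fin d → ℝ, (∀ i ∉ S, p i = 0 ∨ p i = 1) →
    ∀ a b : Fin d → ℝ, a ∈ Set.Icc (0 : Fin d → ℝ) 1 → b ∈ Set.Icc (0 : Fin d → ℝ) 1 →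
      a ≤ b → 0 ≤ quasiVol f S p a b

/-- `f` is coordinatewise right-continuous at every point of `[0,1]^d`. -/
def RightCts {d : ℕ} (f : (Fin d → ℝ) → ℝ) : Prop :=
  ∀ x ∈ Set.Icc (0 : Fin d → ℝ) 1, ∀ i : Fin d,
    Filter.Tendsto (fun y : ℝ => f (Function.update x i y))
      (nhdsWithin (x i) (Set.Icc (x i) 1)) (nhds (f x))

/-- The star-discrepancy of the points `x 1, …, x N` with respect to the measure `μ`. -/
def starDisc {d : ℕ} (N : ℕ) (x : Fin N → Fin d → ℝ) (μ : Measure (Fin d → ℝ)) : ℝ :=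
  ⨆ a : Set.Icc (0 : Fin d → ℝ) 1,
    |(∑ n : Fin N, Set.indicator (Set.Icc 0 (a : Fin d → ℝ)) (fun _ => (1 : ℝ)) (x n)) / N
      - (μ (Set.Icc 0 (a : Fin d → ℝ))).toReal|

section Aux

variable {d : ℕ}

lemma quasiVol_congr (f : (Fin d → ℝ) → ℝ) (S : Finset (Fin d)) (p a b a' b' : Fin d → ℝ)
    (ha : ∀ i ∈ S, a i = a' i) (hb : ∀ i ∈ S, b i = b' i) :
    quasiVol f S p a b = quasiVol f S p a' b' := by
  unfold quasiVol
  refine Finset.sum_congr rfl fun T hT => ?_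
  have harg : (fun i => if i ∈ S then (if i ∈ T then a i else b i) else p i)
      = (fun i => if i ∈ S then (if i ∈ T then a' i else b' i) else p i) := by
    funext i
    by_cases hiS : i ∈ S
    · by_cases hiT : i ∈ T <;> simp [hiS, hiT, ha i hiS, hb i hiS]
    · simp [hiS]
  rw [harg]

lemma quasiVol_add (f g : (Fin d → ℝ) → ℝ) (S : Finset (Fin d)) (p a b : Fin d → ℝ) :
    quasiVol (f + g) S p a b = quasiVol f S p a b + quasiVol g S p a b := by
  unfold quasiVol
  rw [← Finset.sum_add_distrib]
  refine Finset.sum_congr rfl fun T _ => ?_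
  simp [Pi.add_apply]
  ring

lemma quasiVol_empty (f : (Fin d → ℝ) → ℝ) (p a b : Fin d → ℝ) :
    quasiVol f (∅ : Finset (Fin d)) p a b = f p := by
  simp [quasiVol]

lemma quasiVol_insert (f : (Fin d → ℝ) → ℝ) (S : Finset (Fin d)) (i : Fin d) (hiS : i ∉ S)
    (p a b : Fin d → ℝ) :
    quasiVol f (insert i S) p a b =
      quasiVol f S (Function.update p i (b i)) a b
        - quasiVol f S (Function.update p i (a i)) a b := by
  unfold quasiVol
  rw [Finset.sum_powerset_insert hiS]
  have h1 : ∑ T ∈ S.powerset, (-1 : ℝ) ^ T.card *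
        f (fun j => if j ∈ insert i S then (if j ∈ T then a j else b j) else p j)
      = ∑ T ∈ S.powerset, (-1 : ℝ) ^ T.card *
        f (fun j => if j ∈ S then (if j ∈ T then a j else b j) else Function.update p i (b i) j) := by
    refine Finset.sum_congr rfl fun T hT => ?_
    have hTS := Finset.mem_powerset.mp hT
    have harg : (fun j => if j ∈ insert i S then (if j ∈ T then a j else b j) else p j)
        = (fun j => if j ∈ S then (if j ∈ T then a j else b j) else Function.update p i (b i) j) := by
      funext j
      by_cases hj : j = i
      · subst hj
        have hjT : j ∉ T := fun h => hiS (hTS h)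
        simp [hiS, hjT]
      · simp [hj, Function.update_of_ne hj]
    rw [harg]
  have h2 : ∑ T ∈ S.powerset, (-1 : ℝ) ^ (insert i T).card *
        f (fun j => if j ∈ insert i S then (if j ∈ insert i T then a j else b j) else p j)
      = ∑ T ∈ S.powerset, -((-1 : ℝ) ^ T.card *
        f (fun j => if j ∈ S then (if j ∈ T then a j else b j) else Function.update p i (a i) j)) := by
    refine Finset.sum_congr rfl fun T hT => ?_
    have hTS := Finset.mem_powerset.mp hT
    have hiT : i ∉ T := fun h => hiS (hTS h)
    rw [Finset.card_insert_of_notMem hiT]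
    rw [pow_succ]
    have harg : (fun j => if j ∈ insert i S then (if j ∈ insert i T then a j else b j) else p j)
        = (fun j => if j ∈ S then (if j ∈ T then a j else b j) else Function.update p i (a i) j) := by
      funext j
      by_cases hj : j = i
      · subst hj; simp [hiS]
      · simp [hj, Function.update_of_ne hj]
    rw [harg]; ring
  rw [h1, h2, Finset.sum_neg_distrib]
  ring

end Aux
section Aux2

variable {d : ℕ}

lemma telescope1 (g : ℝ → ℝ) (x : ℕ → ℝ) (n : ℕ) (L H : ℝ)
    (h0 : x 0 ≤ L) (hLH : L ≤ H) (hn : H ≤ x n) :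
    ∑ k ∈ Finset.range n, (g (max L (min (x (k + 1)) H)) - g (max L (min (x k) H)))
      = g H - g L := by
  rw [Finset.sum_range_sub (fun k => g (max L (min (x k) H)))]
  have e1 : max L (min (x n) H) = H := by
    rw [min_eq_right hn, max_eq_right hLH]
  have e2 : max L (min (x 0) H) = L := by
    rw [min_eq_left (h0.trans hLH), max_eq_left h0]
  rw [e1, e2]

lemma telescope2 (g : ℝ → ℝ) (x : ℕ → ℝ) (hx : Monotone x) (m : ℕ) (u v : ℝ)
    (h0 : x 0 ≤ u) (huv : u ≤ v) (hm : v ≤ x m) :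
    ∑ j ∈ Finset.range m, (g (max (x j) (min v (x (j + 1)))) - g (max (x j) (min u (x (j + 1)))))
      = g v - g u := by
  induction m generalizing v with
  | zero =>
      have : u = v := le_antisymm huv (hm.trans h0)
      simp [this]
  | succ m IH =>
      rcases le_or_gt v (x m) with hv | hv
      · rw [Finset.sum_range_succ]
        have hxm : x m ≤ x (m + 1) := hx (Nat.le_succ m)
        have e1 : max (x m) (min v (x (m + 1))) = x m := by
          rw [min_eq_left (hv.trans hxm), max_eq_left hv]
        have e2 : max (x m) (min u (x (m + 1))) = x m := by
          rw [min_eq_left ((huv.trans hv).trans hxm), max_eq_left (huv.trans hv)]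
        rw [e1, e2, IH v huv hv]
        ring
      · rcases le_or_gt u (x m) with hu | hu
        · rw [Finset.sum_range_succ]
          have hxm : x m ≤ x (m + 1) := hx (Nat.le_succ m)
          have e1 : max (x m) (min v (x (m + 1))) = v := by
            rw [min_eq_left hm, max_eq_right hv.le]
          have e2 : max (x m) (min u (x (m + 1))) = x m := by
            rw [min_eq_left (hu.trans hxm), max_eq_left hu]
          have hmain : ∑ j ∈ Finset.range m,
              (g (max (x j) (min v (x (j + 1)))) - g (max (x j) (min u (x (j + 1)))))
              = ∑ j ∈ Finset.range m,
              (g (max (x j) (min (x m) (x (j + 1)))) - g (max (x j) (min u (x (j + 1))))) := by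
            refine Finset.sum_congr rfl fun j hj => ?_
            have hjm : j + 1 ≤ m := Finset.mem_range.mp hj
            have h1 : x (j + 1) ≤ x m := hx hjm
            rw [min_eq_right (h1.trans hv.le), min_eq_right h1]
          rw [e1, e2, hmain, IH (x m) hu le_rfl]
          ring
        · rw [Finset.sum_range_succ]
          have e1 : max (x m) (min v (x (m + 1))) = v := by
            rw [min_eq_left hm, max_eq_right hv.le]
          have e2 : max (x m) (min u (x (m + 1))) = u := by
            rw [min_eq_left (huv.trans hm), max_eq_right hu.le]
          have hzero : ∑ j ∈ Finset.range m,
              (g (max (x j) (min v (x (j + 1)))) - g (max (x j) (min u (x (j + 1))))) = 0 := by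
            refine Finset.sum_eq_zero fun j hj => ?_
            have hjm : j + 1 ≤ m := Finset.mem_range.mp hj
            have h1 : x (j + 1) ≤ x m := hx hjm
            have hju : x (j + 1) ≤ u := h1.trans hu.le
            have hxj : x j ≤ x (j + 1) := hx (Nat.le_succ j)
            rw [min_eq_right (hju.trans huv), min_eq_right hju, max_eq_right hxj]
            ring
          rw [e1, e2, hzero]
          ring

lemma sum_piFinset_split {M : Type*} [AddCommMonoid M] (r : Fin d → Finset ℕ) (i : Fin d)
    (F : (Fin d → ℕ) → M) :
    ∑ k ∈ Fintype.piFinset r, F k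
      = ∑ j ∈ r i, ∑ k ∈ Fintype.piFinset (Function.update r i {0}), F (Function.update k i j) := by
  have hprod : (∑ q ∈ (r i) ×ˢ Fintype.piFinset (Function.update r i {0}),
        F (Function.update q.2 i q.1))
      = ∑ j ∈ r i, ∑ k ∈ Fintype.piFinset (Function.update r i {0}), F (Function.update k i j) :=
    Finset.sum_product' (s := r i) (t := Fintype.piFinset (Function.update r i {0}))
      (f := fun j k => F (Function.update k i j))
  rw [← hprod]
  refine Finset.sum_nbij' (i := fun k => (k i, Function.update k i 0))
    (j := fun q => Function.update q.2 i q.1) ?_ ?_ ?_ ?_ ?_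
  · intro k hk
    rw [Fintype.mem_piFinset] at hk
    rw [Finset.mem_product]
    constructor
    · exact hk i
    · rw [Fintype.mem_piFinset]
      intro i'
      by_cases h : i' = i
      · subst h; simp
      · simp [Function.update_of_ne h, hk i']
  · intro q hq
    rw [Finset.mem_product] at hq
    obtain ⟨h1, h2⟩ := hq
    rw [Fintype.mem_piFinset] at h2 ⊢
    intro i'
    by_cases h : i' = i
    · subst h; simpa using h1
    · have := h2 i'
      simpa [Function.update_of_ne h] using this
  · intro k hk
    funext i'
    by_cases h : i' = i
    · subst h; simp
    · simp [Function.update_of_ne h]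
  · intro q hq
    rw [Finset.mem_product] at hq
    obtain ⟨h1, h2⟩ := hq
    rw [Fintype.mem_piFinset] at h2
    have hq2 : q.2 i = 0 := by simpa using h2 i
    have hupd : Function.update (Function.update q.2 i q.1) i 0 = q.2 := by
      funext i'
      by_cases h : i' = i
      · subst h; simp [hq2]
      · simp [Function.update_of_ne h]
    simp [hupd]
  · intro k hk
    congr 1
    funext i'
    by_cases h : i' = i
    · subst h; simp
    · simp [Function.update_of_ne h]

end Aux2
section Aux3

variable {d : ℕ}

lemma sum_piFinset_mul {M : Type*} [AddCommMonoid M] (a b : Fin d → ℕ) (F : (Fin d → ℕ) → M) :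
    ∑ J ∈ Fintype.piFinset (fun i => Finset.range (a i * b i)), F J
      = ∑ κ ∈ Fintype.piFinset (fun i => Finset.range (a i)),
          ∑ r ∈ Fintype.piFinset (fun i => Finset.range (b i)),
            F (fun i => κ i * b i + r i) := by
  have hprod : (∑ q ∈ (Fintype.piFinset (fun i => Finset.range (a i))) ×ˢ
        (Fintype.piFinset (fun i => Finset.range (b i))),
        F (fun i => q.1 i * b i + q.2 i))
      = ∑ κ ∈ Fintype.piFinset (fun i => Finset.range (a i)),
          ∑ r ∈ Fintype.piFinset (fun i => Finset.range (b i)),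
            F (fun i => κ i * b i + r i) :=
    Finset.sum_product' (s := Fintype.piFinset (fun i => Finset.range (a i)))
      (t := Fintype.piFinset (fun i => Finset.range (b i)))
      (f := fun κ r => F (fun i => κ i * b i + r i))
  rw [← hprod]
  refine Finset.sum_nbij' (i := fun J => (fun i => J i / b i, fun i => J i % b i))
    (j := fun q => fun i => q.1 i * b i + q.2 i) ?_ ?_ ?_ ?_ ?_
  · intro J hJ
    rw [Fintype.mem_piFinset] at hJ
    rw [Finset.mem_product]
    constructor <;> rw [Fintype.mem_piFinset] <;> intro i <;>
      have hJi : J i < a i * b i := Finset.mem_range.mp (hJ i)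
    · have hb : 0 < b i := by
        rcases Nat.eq_zero_or_pos (b i) with h | h
        · rw [h, Nat.mul_zero] at hJi; exact absurd hJi (Nat.not_lt_zero _)
        · exact h
      exact Finset.mem_range.mpr ((Nat.div_lt_iff_lt_mul hb).mpr hJi)
    · have hb : 0 < b i := by
        rcases Nat.eq_zero_or_pos (b i) with h | h
        · rw [h, Nat.mul_zero] at hJi; exact absurd hJi (Nat.not_lt_zero _)
        · exact h
      exact Finset.mem_range.mpr (Nat.mod_lt _ hb)
  · intro q hq
    rw [Finset.mem_product] at hq
    obtain ⟨h1, h2⟩ := hq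
    rw [Fintype.mem_piFinset] at h1 h2 ⊢
    intro i
    have hk : q.1 i < a i := Finset.mem_range.mp (h1 i)
    have hr : q.2 i < b i := Finset.mem_range.mp (h2 i)
    refine Finset.mem_range.mpr ?_
    calc q.1 i * b i + q.2 i < q.1 i * b i + b i := Nat.add_lt_add_left hr _
      _ = (q.1 i + 1) * b i := by ring
      _ ≤ a i * b i := Nat.mul_le_mul_right _ hk
  · intro J hJ
    funext i'
    show J i' / b i' * b i' + J i' % b i' = J i'
    rw [Nat.mul_comm]
    exact Nat.div_add_mod (J i') (b i')
  · intro q hq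
    rw [Finset.mem_product] at hq
    obtain ⟨h1, h2⟩ := hq
    rw [Fintype.mem_piFinset] at h1 h2
    have hr : ∀ i, q.2 i < b i := fun i => Finset.mem_range.mp (h2 i)
    have e1 : (fun i => (q.1 i * b i + q.2 i) / b i) = q.1 := by
      funext i
      have hb : 0 < b i := lt_of_le_of_lt (Nat.zero_le _) (hr i)
      rw [Nat.mul_comm (q.1 i) (b i), Nat.mul_add_div hb, Nat.div_eq_of_lt (hr i), Nat.add_zero]
    have e2 : (fun i => (q.1 i * b i + q.2 i) % b i) = q.2 := by
      funext i
      rw [Nat.mul_comm (q.1 i) (b i), Nat.mul_add_mod, Nat.mod_eq_of_lt (hr i)]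
    show ((fun i => (q.1 i * b i + q.2 i) / b i, fun i => (q.1 i * b i + q.2 i) % b i) : _ × _) = q
    rw [e1, e2]
  · intro J hJ
    show F J = F fun i => J i / b i * b i + J i % b i
    congr 1
    funext i'
    rw [Nat.mul_comm]
    exact (Nat.div_add_mod (J i') (b i')).symm

lemma quasiVol_blockSum (f : (Fin d → ℝ) → ℝ) (S : Finset (Fin d)) (n : Fin d → ℕ)
    (α β : Fin d → ℕ → ℝ) (u v : Fin d → ℝ)
    (h : ∀ i ∈ S, ∀ g : ℝ → ℝ,
      ∑ k ∈ Finset.range (n i), (g (β i k) - g (α i k)) = g (v i) - g (u i)) :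
    ∀ p : Fin d → ℝ,
    ∑ κ ∈ Fintype.piFinset (fun i => Finset.range (if i ∈ S then n i else 1)),
        quasiVol f S p (fun i => α i (κ i)) (fun i => β i (κ i))
      = quasiVol f S p u v := by
  induction S using Finset.induction_on with
  | empty =>
      intro p
      have hset : Fintype.piFinset (fun i : Fin d => Finset.range (if i ∈ (∅ : Finset (Fin d)) then n i else 1))
          = {fun _ => 0} := by
        ext k
        simp [Fintype.mem_piFinset, Nat.lt_one_iff, funext_iff]
      rw [hset, Finset.sum_singleton, quasiVol_empty, quasiVol_empty]
  | @insert i S' hiS IH =>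
      intro p
      rw [sum_piFinset_split (fun i' => Finset.range (if i' ∈ insert i S' then n i' else 1)) i]
      have hset : Function.update (fun i' => Finset.range (if i' ∈ insert i S' then n i' else 1)) i {0}
          = fun i' => Finset.range (if i' ∈ S' then n i' else 1) := by
        funext i'
        by_cases h' : i' = i
        · subst h'
          simp [hiS, Function.update_self, Finset.range_one]
        · simp [Function.update_of_ne h', Finset.mem_insert, h']
      rw [hset]
      have hri : Finset.range (if i ∈ insert i S' then n i else 1) = Finset.range (n i) := by
        simp
      rw [hri]
      have hterm : ∀ j ∈ Finset.range (n i),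
          ∀ κ ∈ Fintype.piFinset (fun i' => Finset.range (if i' ∈ S' then n i' else 1)),
          quasiVol f (insert i S') p
              (fun i' => α i' (Function.update κ i j i'))
              (fun i' => β i' (Function.update κ i j i'))
            = quasiVol f S' (Function.update p i (β i j)) (fun i' => α i' (κ i')) (fun i' => β i' (κ i'))
              - quasiVol f S' (Function.update p i (α i j)) (fun i' => α i' (κ i')) (fun i' => β i' (κ i')) := by
        intro j _ κ _
        rw [quasiVol_insert f S' i hiS]
        rw [Function.update_self]
        congr 1
        · exact quasiVol_congr _ _ _ _ _ _ _
            (fun i' hi' => by rw [Function.update_of_ne (ne_of_mem_of_not_mem hi' hiS)])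
            (fun i' hi' => by rw [Function.update_of_ne (ne_of_mem_of_not_mem hi' hiS)])
        · exact quasiVol_congr _ _ _ _ _ _ _
            (fun i' hi' => by rw [Function.update_of_ne (ne_of_mem_of_not_mem hi' hiS)])
            (fun i' hi' => by rw [Function.update_of_ne (ne_of_mem_of_not_mem hi' hiS)])
      rw [Finset.sum_congr rfl fun j hj => Finset.sum_congr rfl fun κ hκ => hterm j hj κ hκ]
      rw [Finset.sum_comm]
      have hinner : ∀ κ ∈ Fintype.piFinset (fun i' => Finset.range (if i' ∈ S' then n i' else 1)),
          ∑ j ∈ Finset.range (n i),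
            (quasiVol f S' (Function.update p i (β i j)) (fun i' => α i' (κ i')) (fun i' => β i' (κ i'))
              - quasiVol f S' (Function.update p i (α i j)) (fun i' => α i' (κ i')) (fun i' => β i' (κ i')))
          = quasiVol f S' (Function.update p i (v i)) (fun i' => α i' (κ i')) (fun i' => β i' (κ i'))
            - quasiVol f S' (Function.update p i (u i)) (fun i' => α i' (κ i')) (fun i' => β i' (κ i')) := by
        intro κ _
        exact h i (Finset.mem_insert_self i S')
          (fun w => quasiVol f S' (Function.update p i w) (fun i' => α i' (κ i')) (fun i' => β i' (κ i')))
      rw [Finset.sum_congr rfl hinner, Finset.sum_sub_distrib]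
      have hIH := fun p' => IH (fun i' hi' g' => h i' (Finset.mem_insert_of_mem hi') g') p'
      rw [hIH, hIH, quasiVol_insert f S' i hiS]

end Aux3
section Aux4

variable {d : ℕ}

/-- A normalized grid: the subdivision points are globally monotone and eventually `hi`. -/
structure NG (d : ℕ) (S : Finset (Fin d)) (lo hi : Fin d → ℝ) where
  m : Fin d → ℕ
  t : Fin d → ℕ → ℝ
  mono : ∀ i ∈ S, Monotone (t i)
  first : ∀ i ∈ S, t i 0 = lo i
  last : ∀ i ∈ S, ∀ j, m i ≤ j → t i j = hi i

namespace NG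

variable {S : Finset (Fin d)} {lo hi : Fin d → ℝ}

lemma lo_le (A : NG d S lo hi) {i : Fin d} (hi' : i ∈ S) (j : ℕ) : lo i ≤ A.t i j := by
  rw [← A.first i hi']
  exact A.mono i hi' (Nat.zero_le j)

lemma le_hi (A : NG d S lo hi) {i : Fin d} (hi' : i ∈ S) (j : ℕ) : A.t i j ≤ hi i := by
  rw [← A.last i hi' (max j (A.m i)) (le_max_right _ _)]
  exact A.mono i hi' (le_max_left _ _)

lemma lo_le_hi (A : NG d S lo hi) {i : Fin d} (hi' : i ∈ S) : lo i ≤ hi i :=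
  (A.lo_le hi' 0).trans (A.le_hi hi' 0)

def toGrid (A : NG d S lo hi) : Grid d S lo hi :=
  ⟨A.m, A.t, fun i hi' j k hjk _ => A.mono i hi' hjk, A.first, fun i hi' => A.last i hi' _ le_rfl⟩

def ofGrid (G : Grid d S lo hi) : NG d S lo hi where
  m := G.m
  t := fun i j => if i ∈ S then G.t i (min j (G.m i)) else 0
  mono := by
    intro i hi' j k hjk
    simp only [hi', if_true]
    exact G.mono i hi' _ _ (min_le_min hjk le_rfl) (min_le_right _ _)
  first := by
    intro i hi'
    simp only [hi', if_true, Nat.zero_min]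
    exact G.first i hi'
  last := by
    intro i hi' j hj
    simp only [hi', if_true, min_eq_right hj]
    exact G.last i hi'

/-- Generic comparison of grid sums: if the points agree on the used range and the first grid
has fewer cells, its grid sum is smaller. -/
lemma gridSum_mono_m (f : (Fin d → ℝ) → ℝ) (p : Fin d → ℝ) {lo' hi' : Fin d → ℝ}
    (A : NG d S lo hi) (B : NG d S lo' hi')
    (hm : ∀ i ∈ S, A.m i ≤ B.m i)
    (ht : ∀ i ∈ S, ∀ j, j ≤ A.m i → A.t i j = B.t i j) :
    gridSum f S p lo hi A.toGrid ≤ gridSum f S p lo' hi' B.toGrid := by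
  unfold gridSum
  have hstep : ∑ k ∈ Fintype.piFinset (fun i => Finset.range (if i ∈ S then A.toGrid.m i else 1)),
      |quasiVol f S p (fun i => A.toGrid.t i (k i)) (fun i => A.toGrid.t i (k i + 1))|
      = ∑ k ∈ Fintype.piFinset (fun i => Finset.range (if i ∈ S then A.toGrid.m i else 1)),
      |quasiVol f S p (fun i => B.toGrid.t i (k i)) (fun i => B.toGrid.t i (k i + 1))| := by
    refine Finset.sum_congr rfl fun k hk => ?_
    rw [Fintype.mem_piFinset] at hk
    congr 1
    refine quasiVol_congr f S p _ _ _ _ ?_ ?_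
    · intro i hi'
      have hki : k i < A.m i := by
        have := Finset.mem_range.mp (hk i)
        simpa [hi', NG.toGrid] using this
      exact ht i hi' (k i) hki.le
    · intro i hi'
      have hki : k i < A.m i := by
        have := Finset.mem_range.mp (hk i)
        simpa [hi', NG.toGrid] using this
      exact ht i hi' (k i + 1) hki
  rw [hstep]
  refine Finset.sum_le_sum_of_subset_of_nonneg ?_ ?_
  · refine Fintype.piFinset_subset _ _ fun i => ?_
    refine Finset.range_subset_range.mpr ?_
    by_cases hi' : i ∈ S
    · simpa [hi', NG.toGrid] using hm i hi'
    · simp [hi']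
  · intro k _ _
    exact abs_nonneg _

lemma gridSum_eq_of (f : (Fin d → ℝ) → ℝ) (p : Fin d → ℝ) {lo' hi' : Fin d → ℝ}
    (A : NG d S lo hi) (B : NG d S lo' hi')
    (hm : ∀ i ∈ S, A.m i = B.m i)
    (ht : ∀ i ∈ S, ∀ j, j ≤ A.m i → A.t i j = B.t i j) :
    gridSum f S p lo hi A.toGrid = gridSum f S p lo' hi' B.toGrid :=
  le_antisymm
    (gridSum_mono_m f p A B (fun i hi' => (hm i hi').le) ht)
    (gridSum_mono_m f p B A (fun i hi' => (hm i hi').ge)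
      (fun i hi' j hj => (ht i hi' j (hj.trans (hm i hi').ge)).symm))

lemma gridSum_ofGrid (f : (Fin d → ℝ) → ℝ) (p : Fin d → ℝ) (G : Grid d S lo hi) :
    gridSum f S p lo hi (ofGrid G).toGrid = gridSum f S p lo hi G := by
  unfold gridSum
  refine Finset.sum_congr rfl fun k hk => ?_
  rw [Fintype.mem_piFinset] at hk
  congr 1
  refine quasiVol_congr f S p _ _ _ _ ?_ ?_
  · intro i hi'
    have hki : k i < G.m i := by
      have := Finset.mem_range.mp (hk i)
      simpa [hi'] using this
    show (if i ∈ S then G.t i (min (k i) (G.m i)) else 0) = G.t i (k i)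
    rw [if_pos hi', min_eq_left hki.le]
  · intro i hi'
    have hki : k i < G.m i := by
      have := Finset.mem_range.mp (hk i)
      simpa [hi'] using this
    show (if i ∈ S then G.t i (min (k i + 1) (G.m i)) else 0) = G.t i (k i + 1)
    rw [if_pos hi', min_eq_left hki]

/-- Bump: add one (degenerate) cell in every direction. -/
def bump (A : NG d S lo hi) : NG d S lo hi where
  m := fun i => A.m i + 1
  t := A.t
  mono := A.mono
  first := A.first
  last := fun i hi' j hj => A.last i hi' j ((Nat.le_succ _).trans hj)

/-- Extend a normalized grid on `[lo,c]` to one on `[lo,hi]` by adding a final interval. -/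
def ext (A : NG d S lo hi) (hi2 : Fin d → ℝ) (hc : ∀ i ∈ S, hi i ≤ hi2 i) : NG d S lo hi2 where
  m := fun i => A.m i + 1
  t := fun i j => if j ≤ A.m i then A.t i j else hi2 i
  mono := by
    intro i hi' j k hjk
    by_cases hj : j ≤ A.m i
    · by_cases hk : k ≤ A.m i
      · simp only [hj, hk, if_true]
        exact A.mono i hi' hjk
      · simp only [hj, hk, if_true, if_false]
        exact (A.le_hi hi' j).trans (hc i hi')
    · have hk : ¬ k ≤ A.m i := fun h => hj (hjk.trans h)
      simp [hj, hk]
  first := by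
    intro i hi'
    simp only [Nat.zero_le, if_true]
    exact A.first i hi'
  last := by
    intro i hi' j hj
    have hj' : A.m i + 1 ≤ j := hj
    have : ¬ j ≤ A.m i := by omega
    simp [this]

end NG

end Aux4
section Aux5

variable {d : ℕ} {S : Finset (Fin d)} {lo hi : Fin d → ℝ}

lemma idx_div {b : ℕ} (q : ℕ) {r : ℕ} (hr : r < b) : (q * b + r) / b = q := by
  have hb : 0 < b := lt_of_le_of_lt (Nat.zero_le _) hr
  rw [Nat.mul_comm, Nat.mul_add_div hb, Nat.div_eq_of_lt hr, Nat.add_zero]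

lemma idx_mod {b : ℕ} (q : ℕ) {r : ℕ} (hr : r < b) : (q * b + r) % b = r := by
  rw [Nat.mul_comm, Nat.mul_add_mod, Nat.mod_eq_of_lt hr]

namespace NG

/-- The product refinement of two normalized grids. -/
def pr (A B : NG d S lo hi) : NG d S lo hi where
  m := fun i => A.m i * B.m i
  t := fun i J => max (A.t i (J / B.m i)) (min (B.t i (J % B.m i)) (A.t i (J / B.m i + 1)))
  mono := by
    intro i hi'
    refine monotone_nat_of_le_succ fun J => ?_
    by_cases hB : B.m i = 0
    · simp only [hB, Nat.div_zero, Nat.mod_zero]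
      exact max_le_max le_rfl (min_le_min (B.mono i hi' (Nat.le_succ J)) le_rfl)
    · have hBpos : 0 < B.m i := Nat.pos_of_ne_zero hB
      have hr : J % B.m i < B.m i := Nat.mod_lt _ hBpos
      have hJ : J = (J / B.m i) * B.m i + J % B.m i := by
        rw [Nat.mul_comm]; exact (Nat.div_add_mod J (B.m i)).symm
      rcases Nat.lt_or_ge (J % B.m i + 1) (B.m i) with hlt | hge
      · have hd : (J + 1) / B.m i = J / B.m i := by
          conv_lhs => rw [hJ]
          rw [Nat.add_assoc]
          exact idx_div _ hlt
        have hm : (J + 1) % B.m i = J % B.m i + 1 := by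
          conv_lhs => rw [hJ]
          rw [Nat.add_assoc]
          exact idx_mod _ hlt
        rw [hd, hm]
        exact max_le_max le_rfl (min_le_min (B.mono i hi' (Nat.le_succ _)) le_rfl)
      · have heq : J % B.m i + 1 = B.m i := le_antisymm hr hge
        have hJ1 : J + 1 = (J / B.m i + 1) * B.m i + 0 := by
          rw [Nat.add_zero, Nat.add_mul, Nat.one_mul]
          omega
        have hd : (J + 1) / B.m i = J / B.m i + 1 := by
          rw [hJ1]; exact idx_div _ hBpos
        have hm : (J + 1) % B.m i = 0 := by
          rw [hJ1]; exact idx_mod _ hBpos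
        rw [hd, hm]
        have h1 : max (A.t i (J / B.m i)) (min (B.t i (J % B.m i)) (A.t i (J / B.m i + 1)))
            ≤ A.t i (J / B.m i + 1) :=
          max_le (A.mono i hi' (Nat.le_succ _)) (min_le_right _ _)
        exact h1.trans (le_max_left _ _)
  first := by
    intro i hi'
    simp only [Nat.zero_div, Nat.zero_mod]
    rw [B.first i hi', min_eq_left (A.lo_le hi' 1), A.first i hi', max_self]
  last := by
    intro i hi' j hj
    have hj' : A.m i * B.m i ≤ j := hj
    by_cases hB : B.m i = 0
    · have hlh : lo i = hi i := by
        rw [← B.first i hi', B.last i hi' 0 (by omega)]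
      have hA1 : A.t i (j / B.m i) = hi i :=
        le_antisymm (A.le_hi hi' _) (hlh ▸ A.lo_le hi' _)
      rw [hA1]
      refine max_eq_left ?_
      exact (min_le_right _ _).trans (A.le_hi hi' _)
    · have hBpos : 0 < B.m i := Nat.pos_of_ne_zero hB
      have hq : A.m i ≤ j / B.m i := by
        rw [Nat.le_div_iff_mul_le hBpos]
        exact hj' 
      rw [A.last i hi' _ hq]
      refine max_eq_left ?_
      exact (min_le_left _ _).trans (B.le_hi hi' _)

lemma pr_t (A B : NG d S lo hi) {i : Fin d} (hi' : i ∈ S) (κ : ℕ) {r : ℕ} (hr : r ≤ B.m i) :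
    (pr A B).t i (κ * B.m i + r)
      = max (A.t i κ) (min (B.t i r) (A.t i (κ + 1))) := by
  by_cases hB : B.m i = 0
  · have hr0 : r = 0 := by omega
    have hlh : lo i = hi i := by
      rw [← B.first i hi', B.last i hi' 0 (by omega)]
    have hAκ : ∀ k, A.t i k = lo i :=
      fun k => le_antisymm (hlh ▸ A.le_hi hi' _) (A.lo_le hi' _)
    have hBk : ∀ k, B.t i k = lo i :=
      fun k => le_antisymm (hlh ▸ B.le_hi hi' _) (B.lo_le hi' _)
    show max (A.t i _) (min (B.t i _) (A.t i _)) = _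
    rw [hAκ, hAκ, hAκ, hBk, hBk]
    simp
  · have hBpos : 0 < B.m i := Nat.pos_of_ne_zero hB
    rcases Nat.lt_or_ge r (B.m i) with hlt | hge
    · show max (A.t i ((κ * B.m i + r) / B.m i))
          (min (B.t i ((κ * B.m i + r) % B.m i)) (A.t i ((κ * B.m i + r) / B.m i + 1))) = _
      rw [idx_div κ hlt, idx_mod κ hlt]
    · have heq : r = B.m i := le_antisymm hr hge
      subst heq
      have hJ1 : κ * B.m i + B.m i = (κ + 1) * B.m i + 0 := by ring
      show max (A.t i ((κ * B.m i + B.m i) / B.m i))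
          (min (B.t i ((κ * B.m i + B.m i) % B.m i)) (A.t i ((κ * B.m i + B.m i) / B.m i + 1))) = _
      rw [hJ1, idx_div _ hBpos, idx_mod _ hBpos]
      rw [B.first i hi', min_eq_left (A.lo_le hi' (κ + 2)),
        max_eq_left (A.lo_le hi' (κ + 1)),
        B.last i hi' _ le_rfl, min_eq_right (A.le_hi hi' (κ + 1)),
        max_eq_right (A.mono i hi' (Nat.le_succ κ))]

lemma gridSum_le_pr_left (f : (Fin d → ℝ) → ℝ) (p : Fin d → ℝ) (A B : NG d S lo hi) :
    gridSum f S p lo hi A.toGrid ≤ gridSum f S p lo hi (pr A B).toGrid := by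
  unfold gridSum
  have hpat : (fun i => Finset.range (if i ∈ S then (pr A B).toGrid.m i else 1))
      = fun i => Finset.range ((if i ∈ S then A.m i else 1) * (if i ∈ S then B.m i else 1)) := by
    funext i
    by_cases hi' : i ∈ S <;> simp [pr, toGrid, hi']
  rw [hpat, sum_piFinset_mul]
  refine Finset.sum_le_sum fun κ hκ => ?_
  rw [Fintype.mem_piFinset] at hκ
  have hblock : ∑ r ∈ Fintype.piFinset (fun i => Finset.range (if i ∈ S then B.m i else 1)),
      quasiVol f S p
        (fun i => (pr A B).toGrid.t i (κ i * (if i ∈ S then B.m i else 1) + r i))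
        (fun i => (pr A B).toGrid.t i (κ i * (if i ∈ S then B.m i else 1) + r i + 1))
      = quasiVol f S p (fun i => A.toGrid.t i (κ i)) (fun i => A.toGrid.t i (κ i + 1)) := by
    have hcongr : ∀ r ∈ Fintype.piFinset (fun i => Finset.range (if i ∈ S then B.m i else 1)),
        quasiVol f S p
          (fun i => (pr A B).toGrid.t i (κ i * (if i ∈ S then B.m i else 1) + r i))
          (fun i => (pr A B).toGrid.t i (κ i * (if i ∈ S then B.m i else 1) + r i + 1))
        = quasiVol f S p
          (fun i => max (A.t i (κ i)) (min (B.t i (r i)) (A.t i (κ i + 1))))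
          (fun i => max (A.t i (κ i)) (min (B.t i (r i + 1)) (A.t i (κ i + 1)))) := by
      intro r hr
      rw [Fintype.mem_piFinset] at hr
      refine quasiVol_congr f S p _ _ _ _ ?_ ?_
      · intro i hi'
        have hri : r i < B.m i := by
          have := Finset.mem_range.mp (hr i); simpa [hi'] using this
        show (pr A B).t i (κ i * (if i ∈ S then B.m i else 1) + r i) = _
        rw [if_pos hi']
        exact pr_t A B hi' (κ i) hri.le
      · intro i hi'
        have hri : r i < B.m i := by
          have := Finset.mem_range.mp (hr i); simpa [hi'] using this
        show (pr A B).t i (κ i * (if i ∈ S then B.m i else 1) + r i + 1) = _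
        rw [if_pos hi', Nat.add_assoc]
        exact pr_t A B hi' (κ i) hri
    rw [Finset.sum_congr rfl hcongr]
    exact quasiVol_blockSum f S B.m
      (fun i r => max (A.t i (κ i)) (min (B.t i r) (A.t i (κ i + 1))))
      (fun i r => max (A.t i (κ i)) (min (B.t i (r + 1)) (A.t i (κ i + 1))))
      (fun i => A.t i (κ i)) (fun i => A.t i (κ i + 1))
      (fun i hi' g => by
        refine telescope1 g (B.t i) (B.m i) (A.t i (κ i)) (A.t i (κ i + 1)) ?_ ?_ ?_
        · rw [B.first i hi']; exact A.lo_le hi' _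
        · exact A.mono i hi' (Nat.le_succ _)
        · rw [B.last i hi' _ le_rfl]; exact A.le_hi hi' _) p
  rw [← hblock]
  exact Finset.abs_sum_le_sum_abs _ _

lemma gridSum_le_pr_right (f : (Fin d → ℝ) → ℝ) (p : Fin d → ℝ) (A B : NG d S lo hi) :
    gridSum f S p lo hi B.toGrid ≤ gridSum f S p lo hi (pr A B).toGrid := by
  unfold gridSum
  have hpat : (fun i => Finset.range (if i ∈ S then (pr A B).toGrid.m i else 1))
      = fun i => Finset.range ((if i ∈ S then A.m i else 1) * (if i ∈ S then B.m i else 1)) := by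
    funext i
    by_cases hi' : i ∈ S <;> simp [pr, toGrid, hi']
  rw [hpat, sum_piFinset_mul, Finset.sum_comm]
  refine Finset.sum_le_sum fun lam hlam => ?_
  rw [Fintype.mem_piFinset] at hlam
  have hblock : ∑ κ ∈ Fintype.piFinset (fun i => Finset.range (if i ∈ S then A.m i else 1)),
      quasiVol f S p
        (fun i => (pr A B).toGrid.t i (κ i * (if i ∈ S then B.m i else 1) + lam i))
        (fun i => (pr A B).toGrid.t i (κ i * (if i ∈ S then B.m i else 1) + lam i + 1))
      = quasiVol f S p (fun i => B.toGrid.t i (lam i)) (fun i => B.toGrid.t i (lam i + 1)) := by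
    have hcongr : ∀ κ ∈ Fintype.piFinset (fun i => Finset.range (if i ∈ S then A.m i else 1)),
        quasiVol f S p
          (fun i => (pr A B).toGrid.t i (κ i * (if i ∈ S then B.m i else 1) + lam i))
          (fun i => (pr A B).toGrid.t i (κ i * (if i ∈ S then B.m i else 1) + lam i + 1))
        = quasiVol f S p
          (fun i => max (A.t i (κ i)) (min (B.t i (lam i)) (A.t i (κ i + 1))))
          (fun i => max (A.t i (κ i)) (min (B.t i (lam i + 1)) (A.t i (κ i + 1)))) := by
      intro κ hκ
      rw [Fintype.mem_piFinset] at hκ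
      refine quasiVol_congr f S p _ _ _ _ ?_ ?_
      · intro i hi'
        have hli : lam i < B.m i := by
          have := Finset.mem_range.mp (hlam i); simpa [hi', NG.toGrid] using this
        show (pr A B).t i (κ i * (if i ∈ S then B.m i else 1) + lam i) = _
        rw [if_pos hi']
        exact pr_t A B hi' (κ i) hli.le
      · intro i hi'
        have hli : lam i < B.m i := by
          have := Finset.mem_range.mp (hlam i); simpa [hi', NG.toGrid] using this
        show (pr A B).t i (κ i * (if i ∈ S then B.m i else 1) + lam i + 1) = _
        rw [if_pos hi', Nat.add_assoc]
        exact pr_t A B hi' (κ i) hli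
    rw [Finset.sum_congr rfl hcongr]
    exact quasiVol_blockSum f S A.m
      (fun i κ => max (A.t i κ) (min (B.t i (lam i)) (A.t i (κ + 1))))
      (fun i κ => max (A.t i κ) (min (B.t i (lam i + 1)) (A.t i (κ + 1))))
      (fun i => B.t i (lam i)) (fun i => B.t i (lam i + 1))
      (fun i hi' g => by
        refine telescope2 g (A.t i) (A.mono i hi') (A.m i) (B.t i (lam i)) (B.t i (lam i + 1)) ?_ ?_ ?_
        · rw [A.first i hi']; exact B.lo_le hi' _
        · exact B.mono i hi' (Nat.le_succ _)
        · rw [A.last i hi' _ le_rfl]; exact B.le_hi hi' _) p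
  rw [← hblock]
  exact Finset.abs_sum_le_sum_abs _ _

end NG

end Aux5
section Aux6

variable {d : ℕ} {S : Finset (Fin d)} {lo hi : Fin d → ℝ}

def trivGrid (h : ∀ i ∈ S, lo i ≤ hi i) : Grid d S lo hi where
  m := fun _ => 1
  t := fun i j => if j = 0 then lo i else hi i
  mono := by
    intro i hi' j k hjk _
    by_cases hj : j = 0
    · by_cases hk : k = 0 <;> simp [hj, hk, h i hi']
    · have hk : ¬ k = 0 := by omega
      simp [hj, hk]
  first := fun i _ => by simp
  last := fun i _ => by simp

lemma gridSum_nonneg (f : (Fin d → ℝ) → ℝ) (p : Fin d → ℝ) (G : Grid d S lo hi) :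
    0 ≤ gridSum f S p lo hi G :=
  Finset.sum_nonneg fun _ _ => abs_nonneg _

lemma gridSum_add_le (f g : (Fin d → ℝ) → ℝ) (p : Fin d → ℝ) (G : Grid d S lo hi) :
    gridSum (f + g) S p lo hi G ≤ gridSum f S p lo hi G + gridSum g S p lo hi G := by
  unfold gridSum
  rw [← Finset.sum_add_distrib]
  refine Finset.sum_le_sum fun k _ => ?_
  rw [quasiVol_add]
  exact abs_add_le _ _

lemma bddVitali_sub (φ : (Fin d → ℝ) → ℝ) {c u : Fin d → ℝ}
    (h : BddVitali φ S 0 0 u) (hcu : ∀ i ∈ S, c i ≤ u i) : BddVitali φ S 0 0 c := by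
  obtain ⟨B, hB⟩ := h
  refine ⟨B, ?_⟩
  rintro x ⟨W, rfl⟩
  have h1 : gridSum φ S 0 0 c W = gridSum φ S 0 0 c (NG.ofGrid W).toGrid :=
    (NG.gridSum_ofGrid φ 0 W).symm
  have h2 : gridSum φ S 0 0 c (NG.ofGrid W).toGrid
      ≤ gridSum φ S 0 0 u ((NG.ofGrid W).ext u hcu).toGrid := by
    refine NG.gridSum_mono_m φ 0 _ _ (fun i _ => Nat.le_succ _) ?_
    intro i hi' j hj
    show (NG.ofGrid W).t i j = if j ≤ (NG.ofGrid W).m i then (NG.ofGrid W).t i j else u i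
    rw [if_pos hj]
  have h3 : gridSum φ S 0 0 u ((NG.ofGrid W).ext u hcu).toGrid ≤ B :=
    hB ⟨_, rfl⟩
  linarith

lemma bddVitali_add (f g : (Fin d → ℝ) → ℝ) {p lo' hi' : Fin d → ℝ}
    (h1 : BddVitali f S p lo' hi') (h2 : BddVitali g S p lo' hi') :
    BddVitali (f + g) S p lo' hi' := by
  obtain ⟨B1, hB1⟩ := h1
  obtain ⟨B2, hB2⟩ := h2
  refine ⟨B1 + B2, ?_⟩
  rintro x ⟨W, rfl⟩
  have := gridSum_add_le f g p W
  have e1 : gridSum f S p lo' hi' W ≤ B1 := hB1 ⟨W, rfl⟩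
  have e2 : gridSum g S p lo' hi' W ≤ B2 := hB2 ⟨W, rfl⟩
  linarith

lemma crux (f g : (Fin d → ℝ) → ℝ) (S : Finset (Fin d)) (a b : Fin d → ℝ)
    (hab : ∀ i ∈ S, a i ≤ b i)
    (G : Grid d S 0 b) (Gf Gg : Grid d S 0 a) :
    ∃ (K : NG d S 0 b) (Ki : NG d S 0 a),
      gridSum (f + g) S 0 0 b G ≤ gridSum (f + g) S 0 0 b K.toGrid ∧
      gridSum f S 0 0 a Gf ≤ gridSum f S 0 0 a Ki.toGrid ∧
      gridSum g S 0 0 a Gg ≤ gridSum g S 0 0 a Ki.toGrid ∧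
      gridSum (f + g) S 0 0 b K.toGrid - gridSum (f + g) S 0 0 a Ki.toGrid
        ≤ (gridSum f S 0 0 b K.toGrid - gridSum f S 0 0 a Ki.toGrid)
          + (gridSum g S 0 0 b K.toGrid - gridSum g S 0 0 a Ki.toGrid) := by
  classical
  set Af := NG.ofGrid Gf with hAf
  set Ag := NG.ofGrid Gg with hAg
  set A := NG.pr Af Ag with hA
  set B2 := NG.bump (NG.ofGrid G) with hB2
  set E := A.ext b hab with hE
  set K := NG.pr E B2 with hK
  -- clamp of B2 to [0,a]
  have h0a : ∀ i ∈ S, (0:ℝ) ≤ a i := fun i hi' => by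
    have := A.lo_le_hi hi'
    simpa using this
  set B2a : NG d S 0 a := {
    m := B2.m
    t := fun i j => min (B2.t i j) (a i)
    mono := fun i hi' j k hjk => min_le_min (B2.mono i hi' hjk) le_rfl
    first := fun i hi' => by
      have := B2.first i hi'
      simp only [this]
      simpa using min_eq_left (h0a i hi')
    last := fun i hi' j hj => by
      have := B2.last i hi' j hj
      simp only [this]
      simpa using min_eq_right (hab i hi') } with hB2a
  set Ki := NG.pr A B2a with hKi
  refine ⟨K, Ki, ?_, ?_, ?_, ?_⟩
  · -- G ≤ K
    calc gridSum (f + g) S 0 0 b G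
        = gridSum (f + g) S 0 0 b (NG.ofGrid G).toGrid := (NG.gridSum_ofGrid _ _ _).symm
      _ ≤ gridSum (f + g) S 0 0 b B2.toGrid :=
          NG.gridSum_mono_m _ _ _ _ (fun i _ => Nat.le_succ _) (fun i _ j _ => rfl)
      _ ≤ gridSum (f + g) S 0 0 b K.toGrid := NG.gridSum_le_pr_right _ _ E B2
  · calc gridSum f S 0 0 a Gf
        = gridSum f S 0 0 a Af.toGrid := (NG.gridSum_ofGrid _ _ _).symm
      _ ≤ gridSum f S 0 0 a A.toGrid := NG.gridSum_le_pr_left _ _ Af Ag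
      _ ≤ gridSum f S 0 0 a Ki.toGrid := NG.gridSum_le_pr_left _ _ A B2a
  · calc gridSum g S 0 0 a Gg
        = gridSum g S 0 0 a Ag.toGrid := (NG.gridSum_ofGrid _ _ _).symm
      _ ≤ gridSum g S 0 0 a A.toGrid := NG.gridSum_le_pr_right _ _ Af Ag
      _ ≤ gridSum g S 0 0 a Ki.toGrid := NG.gridSum_le_pr_left _ _ A B2a
  · -- decomposition
    have hB2pos : ∀ i, 0 < B2.m i := fun i => Nat.succ_pos _
    have hKt : ∀ i ∈ S, ∀ j, j ≤ Ki.m i → K.t i j = Ki.t i j := by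
      intro i hi' j hj
      have hmKi : Ki.m i = A.m i * B2.m i := rfl
      rcases Nat.lt_or_ge j (A.m i * B2.m i) with hlt | hge
      · have hq : j / B2.m i < A.m i := (Nat.div_lt_iff_lt_mul (hB2pos i)).mpr (by
          rw [Nat.mul_comm] at hlt ⊢
          exact hlt)
        show max (E.t i (j / B2.m i)) (min (B2.t i (j % B2.m i)) (E.t i (j / B2.m i + 1)))
            = max (A.t i (j / B2.m i)) (min (min (B2.t i (j % B2.m i)) (a i)) (A.t i (j / B2.m i + 1)))
        have he1 : E.t i (j / B2.m i) = A.t i (j / B2.m i) := by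
          show (if j / B2.m i ≤ A.m i then A.t i (j / B2.m i) else b i) = _
          rw [if_pos hq.le]
        have he2 : E.t i (j / B2.m i + 1) = A.t i (j / B2.m i + 1) := by
          show (if j / B2.m i + 1 ≤ A.m i then A.t i (j / B2.m i + 1) else b i) = _
          rw [if_pos (show j / B2.m i + 1 ≤ A.m i from hq)]
        rw [he1, he2]
        congr 1
        show _ = B2.t i (j % B2.m i) ⊓ a i ⊓ A.t i (j / B2.m i + 1)
        rw [min_assoc, min_eq_right (A.le_hi hi' (j / B2.m i + 1))]
      · have hj' : j = A.m i * B2.m i := le_antisymm (hmKi ▸ hj) hge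
        subst hj'
        have hki : Ki.t i (A.m i * B2.m i) = a i := Ki.last i hi' _ le_rfl
        rw [hki]
        have hidx1 : (A.m i * B2.m i) / B2.m i = A.m i := by
          have := idx_div (b := B2.m i) (A.m i) (hB2pos i)
          simpa using this
        have hidx2 : (A.m i * B2.m i) % B2.m i = 0 := by
          have := idx_mod (b := B2.m i) (A.m i) (hB2pos i)
          simpa using this
        show max (E.t i (A.m i * B2.m i / B2.m i))
            (min (B2.t i (A.m i * B2.m i % B2.m i)) (E.t i (A.m i * B2.m i / B2.m i + 1))) = a i
        rw [hidx1, hidx2]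
        have he1 : E.t i (A.m i) = a i := by
          show (if A.m i ≤ A.m i then A.t i (A.m i) else b i) = _
          rw [if_pos le_rfl]
          exact A.last i hi' _ le_rfl
        have hb20 : B2.t i 0 = 0 := by
          have := B2.first i hi'
          simpa using this
        have h0E : (0:ℝ) ≤ E.t i (A.m i + 1) := by simpa using E.lo_le hi' (A.m i + 1)
        rw [he1, hb20, min_eq_left h0E, max_eq_left (h0a i hi')]
    -- index sets
    have hmK : ∀ i ∈ S, Ki.m i ≤ K.m i := by
      intro i _
      show A.m i * B2.m i ≤ (A.m i + 1) * B2.m i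
      exact Nat.mul_le_mul_right _ (Nat.le_succ _)
    have hsub : Fintype.piFinset (fun i => Finset.range (if i ∈ S then Ki.m i else 1))
        ⊆ Fintype.piFinset (fun i => Finset.range (if i ∈ S then K.m i else 1)) := by
      refine Fintype.piFinset_subset _ _ fun i => ?_
      refine Finset.range_subset_range.mpr ?_
      by_cases hi' : i ∈ S
      · simpa [hi'] using hmK i hi'
      · simp [hi']
    have hin : ∀ φ : (Fin d → ℝ) → ℝ,
        ∑ J ∈ Fintype.piFinset (fun i => Finset.range (if i ∈ S then Ki.m i else 1)),
          |quasiVol φ S 0 (fun i => K.t i (J i)) (fun i => K.t i (J i + 1))|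
        = gridSum φ S 0 0 a Ki.toGrid := by
      intro φ
      unfold gridSum
      refine Finset.sum_congr rfl fun J hJ => ?_
      rw [Fintype.mem_piFinset] at hJ
      congr 1
      refine quasiVol_congr φ S 0 _ _ _ _ ?_ ?_
      · intro i hi'
        have hJi : J i < Ki.m i := by
          have := Finset.mem_range.mp (hJ i); simpa [hi', NG.toGrid] using this
        exact hKt i hi' (J i) hJi.le
      · intro i hi'
        have hJi : J i < Ki.m i := by
          have := Finset.mem_range.mp (hJ i); simpa [hi', NG.toGrid] using this
        exact hKt i hi' (J i + 1) hJi
    have hdecomp : ∀ φ : (Fin d → ℝ) → ℝ,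
        gridSum φ S 0 0 b K.toGrid
          = gridSum φ S 0 0 a Ki.toGrid
            + ∑ J ∈ (Fintype.piFinset (fun i => Finset.range (if i ∈ S then K.m i else 1))
                \ Fintype.piFinset (fun i => Finset.range (if i ∈ S then Ki.m i else 1))),
              |quasiVol φ S 0 (fun i => K.t i (J i)) (fun i => K.t i (J i + 1))| := by
      intro φ
      rw [← hin φ]
      rw [add_comm]
      exact (Finset.sum_sdiff hsub).symm
    rw [hdecomp (f + g), hdecomp f, hdecomp g]
    have hout : ∑ J ∈ (Fintype.piFinset (fun i => Finset.range (if i ∈ S then K.m i else 1))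
          \ Fintype.piFinset (fun i => Finset.range (if i ∈ S then Ki.m i else 1))),
        |quasiVol (f + g) S 0 (fun i => K.t i (J i)) (fun i => K.t i (J i + 1))|
        ≤ (∑ J ∈ (Fintype.piFinset (fun i => Finset.range (if i ∈ S then K.m i else 1))
          \ Fintype.piFinset (fun i => Finset.range (if i ∈ S then Ki.m i else 1))),
        |quasiVol f S 0 (fun i => K.t i (J i)) (fun i => K.t i (J i + 1))|)
        + ∑ J ∈ (Fintype.piFinset (fun i => Finset.range (if i ∈ S then K.m i else 1))
          \ Fintype.piFinset (fun i => Finset.range (if i ∈ S then Ki.m i else 1))),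
        |quasiVol g S 0 (fun i => K.t i (J i)) (fun i => K.t i (J i + 1))| := by
      rw [← Finset.sum_add_distrib]
      refine Finset.sum_le_sum fun J _ => ?_
      rw [quasiVol_add]
      exact abs_add_le _ _
    linarith

end Aux6
section Aux7

variable {d : ℕ}

lemma key (f g : (Fin d → ℝ) → ℝ) (S : Finset (Fin d)) (a b : Fin d → ℝ)
    (h0a : ∀ i ∈ S, (0:ℝ) ≤ a i) (hab : ∀ i ∈ S, a i ≤ b i)
    (bfb : BddVitali f S 0 0 b) (bgb : BddVitali g S 0 0 b)
    (bfga : BddVitali (f + g) S 0 0 a) :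
    vitaliVar (f + g) S 0 0 b + vitaliVar f S 0 0 a + vitaliVar g S 0 0 a
      ≤ vitaliVar f S 0 0 b + vitaliVar g S 0 0 b + vitaliVar (f + g) S 0 0 a := by
  have h0b : ∀ i ∈ S, (0:ℝ) ≤ b i := fun i hi => (h0a i hi).trans (hab i hi)
  haveI hna : Nonempty (Grid d S 0 a) :=
    ⟨trivGrid (fun i hi => by simpa using h0a i hi)⟩
  haveI hnb : Nonempty (Grid d S 0 b) :=
    ⟨trivGrid (fun i hi => by simpa using h0b i hi)⟩
  set C := vitaliVar f S 0 0 b + vitaliVar g S 0 0 b + vitaliVar (f + g) S 0 0 a with hC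
  have main : ∀ (G : Grid d S 0 b) (Gf Gg : Grid d S 0 a),
      gridSum (f + g) S 0 0 b G + gridSum f S 0 0 a Gf + gridSum g S 0 0 a Gg ≤ C := by
    intro G Gf Gg
    obtain ⟨K, Ki, h1, h2, h3, h4⟩ := crux f g S a b hab G Gf Gg
    have hfK : gridSum f S 0 0 b K.toGrid ≤ vitaliVar f S 0 0 b := by
      unfold vitaliVar
      exact le_csSup bfb ⟨K.toGrid, rfl⟩
    have hgK : gridSum g S 0 0 b K.toGrid ≤ vitaliVar g S 0 0 b := by
      unfold vitaliVar
      exact le_csSup bgb ⟨K.toGrid, rfl⟩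
    have hKi : gridSum (f + g) S 0 0 a Ki.toGrid ≤ vitaliVar (f + g) S 0 0 a := by
      unfold vitaliVar
      exact le_csSup bfga ⟨Ki.toGrid, rfl⟩
    rw [hC]
    linarith
  have vle : ∀ (φ : (Fin d → ℝ) → ℝ) (c : Fin d → ℝ) (M : ℝ), Nonempty (Grid d S 0 c) →
      (∀ W : Grid d S 0 c, gridSum φ S 0 0 c W ≤ M) → vitaliVar φ S 0 0 c ≤ M := by
    intro φ c M hne hW
    haveI := hne
    unfold vitaliVar
    apply csSup_le (Set.range_nonempty _)
    rintro x ⟨W, rfl⟩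
    exact hW W
  have s1 : vitaliVar (f + g) S 0 0 b ≤ C - vitaliVar f S 0 0 a - vitaliVar g S 0 0 a := by
    refine vle _ _ _ hnb fun G => ?_
    have s2 : vitaliVar f S 0 0 a ≤ C - gridSum (f + g) S 0 0 b G - vitaliVar g S 0 0 a := by
      refine vle _ _ _ hna fun Gf => ?_
      have s3 : vitaliVar g S 0 0 a ≤ C - gridSum (f + g) S 0 0 b G - gridSum f S 0 0 a Gf := by
        refine vle _ _ _ hna fun Gg => ?_
        linarith [main G Gf Gg]
      linarith
    linarith
  linarith

end Aux7
/-- Lemma 1 of the paper: a refined triangle-type inequality for the HK-variation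
anchored at `0` on nested boxes `[0,a] ⊆ [0,b]`. -/
theorem stmt8 {d : ℕ} (f g : (Fin d → ℝ) → ℝ) (hf : BddHKVar0 f) (hg : BddHKVar0 g)
    (a b : Fin d → ℝ) (ha : a ∈ Set.Icc (0 : Fin d → ℝ) 1)
    (hb : b ∈ Set.Icc (0 : Fin d → ℝ) 1) (hab : a ≤ b) :
    hkVar0On (f + g) b - hkVar0On (f + g) a ≤
      hkVar0On f b + hkVar0On g b - hkVar0On f a - hkVar0On g a := by
  have H : ∑ S ∈ (Finset.univ : Finset (Fin d)).powerset.erase ∅,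
        (vitaliVar (f + g) S 0 0 b + vitaliVar f S 0 0 a + vitaliVar g S 0 0 a)
      ≤ ∑ S ∈ (Finset.univ : Finset (Fin d)).powerset.erase ∅,
        (vitaliVar f S 0 0 b + vitaliVar g S 0 0 b + vitaliVar (f + g) S 0 0 a) := by
    refine Finset.sum_le_sum fun S hS => ?_
    have hf1 : BddVitali f S 0 0 1 := hf S hS
    have hg1 : BddVitali g S 0 0 1 := hg S hS
    have hb1 : ∀ i ∈ S, b i ≤ 1 := fun i _ => hb.2 i
    have ha1 : ∀ i ∈ S, a i ≤ 1 := fun i _ => ha.2 i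
    have h0a : ∀ i ∈ S, (0:ℝ) ≤ a i := fun i _ => ha.1 i
    have hab' : ∀ i ∈ S, a i ≤ b i := fun i _ => hab i
    exact key f g S a b h0a hab'
      (bddVitali_sub f hf1 hb1) (bddVitali_sub g hg1 hb1)
      (bddVitali_add f g (bddVitali_sub f hf1 ha1) (bddVitali_sub g hg1 ha1))
  simp only [Finset.sum_add_distrib] at H
  unfold hkVar0On hkVarOn
  linarith
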